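/- The wedge W_R is not properly contained in itself (equivalently, a wedge and its causal complement are not properly spacelike separated): for every s ∈ (0, π) one has exp(s·K₀ₙ)·W_R ⊄ W_R, where K₀ₙ := E₀ₙ − Eₙ₀; specifically, for any a > 0 with tanh(a) < sin(s), the point x_a := (0, sinh(a), 0, …, 0, cosh(a)) lies in W_R but exp(s·K₀ₙ)·x_a ∉ W_R. Consequently there is no ε > 0 such that every (n+1)×(n+1) real matrix λ with λᵀgλ = g and ‖λ − I‖ < ε satisfies λ·W_R ⊆ W_R. -/

import Mathlib

open Matrix NormedSpace

/-- The diagonal entries of the metric `g = diag(1, −1, …, −1, 1)` on `ℝ^{n+1}`. -/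
def eta (n : ℕ) (i : Fin (n + 1)) : ℝ := if i = 0 ∨ i = Fin.last n then 1 else -1

/-- The ambient bilinear form `x·y = x₀y₀ − x₁y₁ − ⋯ − x_{n−1}y_{n−1} + x_ny_n`. -/
def mdot (n : ℕ) (x y : Fin (n + 1) → ℝ) : ℝ := ∑ i, eta n i * x i * y i

/-- Anti–de Sitter space: the quadric `{x ∈ ℝ^{n+1} : x·x = 1}`. -/
def AdS (n : ℕ) : Set (Fin (n + 1) → ℝ) := {x | mdot n x x = 1}

/-- The right wedge `W_R = {x ∈ AdS : x₁ > |x₀|, xₙ > 0}`. -/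
def WR (n : ℕ) : Set (Fin (n + 1) → ℝ) :=
  {x | x ∈ AdS n ∧ |x 0| < x 1 ∧ 0 < x (Fin.last n)}

/-- The opposite wedge `W_R′ = {x ∈ AdS : −x₁ > |x₀|, xₙ > 0}`. -/
def WRp (n : ℕ) : Set (Fin (n + 1) → ℝ) :=
  {x | x ∈ AdS n ∧ |x 0| < -x 1 ∧ 0 < x (Fin.last n)}

/-- The conjugate wedge `W̃_R = {x ∈ AdS : −x₁ > |x₀|, xₙ < 0}`. -/
def WtR (n : ℕ) : Set (Fin (n + 1) → ℝ) :=
  {x | x ∈ AdS n ∧ |x 0| < -x 1 ∧ x (Fin.last n) < 0}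

/-- The conjugate opposite wedge `W̃_R′ = {x ∈ AdS : x₁ > |x₀|, xₙ < 0}`. -/
def WtRp (n : ℕ) : Set (Fin (n + 1) → ℝ) :=
  {x | x ∈ AdS n ∧ |x 0| < x 1 ∧ x (Fin.last n) < 0}

/-- The matrix unit `E_{μν}`. -/
noncomputable def E (n : ℕ) (μ ν : Fin (n + 1)) : Matrix (Fin (n + 1)) (Fin (n + 1)) ℝ :=
  Matrix.single μ ν 1

/-- `K₀ₙ = E₀ₙ − Eₙ₀`, generator of the rotation in the 0–n–plane. -/
noncomputable def K0n (n : ℕ) : Matrix (Fin (n + 1)) (Fin (n + 1)) ℝ :=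
  E n 0 (Fin.last n) - E n (Fin.last n) 0

/-- The metric matrix `g = diag(1, −1, …, −1, 1)`. -/
noncomputable def gMat (n : ℕ) : Matrix (Fin (n + 1)) (Fin (n + 1)) ℝ :=
  Matrix.diagonal (eta n)

/-- The point `x_a = (0, sinh a, 0, …, 0, cosh a)` on the AdS quadric. -/
noncomputable def xPt (n : ℕ) (a : ℝ) : Fin (n + 1) → ℝ := fun i =>
  if i = 1 then Real.sinh a else if i = Fin.last n then Real.cosh a else 0

open scoped Matrix.Norms.L2Operator



noncomputable def Pm (n : ℕ) : Matrix (Fin (n + 1)) (Fin (n + 1)) ℝ :=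
  Matrix.single 0 0 1 + Matrix.single (Fin.last n) (Fin.last n) 1

noncomputable def Rm (n : ℕ) (s : ℝ) : Matrix (Fin (n + 1)) (Fin (n + 1)) ℝ :=
  1 - Pm n + Real.cos s • Pm n + Real.sin s • K0n n

variable {n : ℕ}

lemma PP (h : (0 : Fin (n+1)) ≠ Fin.last n) : Pm n * Pm n = Pm n := by
  simp [Pm, add_mul, mul_add, Matrix.single_mul_single_same, Matrix.single_mul_single_of_ne, h, h.symm]

lemma PK (h : (0 : Fin (n+1)) ≠ Fin.last n) : Pm n * K0n n = K0n n := by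
  simp [Pm, K0n, E, add_mul, mul_sub, Matrix.single_mul_single_same, Matrix.single_mul_single_of_ne, h, h.symm]

lemma KP (h : (0 : Fin (n+1)) ≠ Fin.last n) : K0n n * Pm n = K0n n := by
  simp [Pm, K0n, E, sub_mul, mul_add, Matrix.single_mul_single_same, Matrix.single_mul_single_of_ne, h, h.symm]
  abel

lemma KK (h : (0 : Fin (n+1)) ≠ Fin.last n) : K0n n * K0n n = -Pm n := by
  simp [Pm, K0n, E, sub_mul, mul_sub, Matrix.single_mul_single_same, Matrix.single_mul_single_of_ne, h, h.symm]
  abel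

lemma Rm_mul (h : (0 : Fin (n+1)) ≠ Fin.last n) (s t : ℝ) :
    Rm n s * Rm n t = Rm n (s + t) := by
  simp only [Rm, mul_add, add_mul, mul_sub, sub_mul, one_mul, mul_one,
    smul_mul_assoc, mul_smul_comm, PP h, PK h, KP h, KK h, smul_smul, smul_neg]
  rw [Real.cos_add, Real.sin_add]
  module

lemma R_zero : Rm n 0 = 1 := by simp [Rm]

lemma sbm_transpose (i j : Fin (n+1)) (c : ℝ) :
    (Matrix.single i j c)ᵀ = Matrix.single j i c := by
  ext a b
  simp [Matrix.single, and_comm]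

lemma Rm_transpose (s : ℝ) : (Rm n s)ᵀ = Rm n (-s) := by
  simp [Rm, Pm, K0n, E, transpose_add, transpose_sub, transpose_smul, transpose_one,
    sbm_transpose, Real.cos_neg, Real.sin_neg, smul_sub, neg_smul]
  abel

lemma gMat_eq (h : (0 : Fin (n+1)) ≠ Fin.last n) : gMat n = (2:ℝ) • Pm n - 1 := by
  ext i j
  rcases eq_or_ne i j with rfl | hij
  · by_cases h0 : i = 0
    · subst h0
      simp [gMat, eta, Pm, Matrix.single, Matrix.one_apply, h, h.symm]
      norm_num
    · by_cases hl : i = Fin.last n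
      · subst hl
        simp [gMat, eta, Pm, Matrix.single, Matrix.one_apply, h, h.symm]
        norm_num
      · simp [gMat, eta, Pm, Matrix.single, Matrix.one_apply, h0, hl,
          Ne.symm h0, Ne.symm hl]
  · have c1 : ¬((0:Fin (n+1)) = i ∧ (0:Fin (n+1)) = j) := by
      rintro ⟨rfl, rfl⟩; exact hij rfl
    have c2 : ¬(Fin.last n = i ∧ Fin.last n = j) := by
      rintro ⟨rfl, rfl⟩; exact hij rfl
    simp [gMat, Matrix.diagonal_apply_ne _ hij, Pm, Matrix.single, Matrix.one_apply,
      hij, c1, c2]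


lemma KR (h : (0 : Fin (n+1)) ≠ Fin.last n) (t : ℝ) :
    K0n n * Rm n t = Real.cos t • K0n n - Real.sin t • Pm n := by
  simp only [Rm, mul_add, mul_sub, mul_one, mul_smul_comm, KP h, KK h, smul_neg]
  module

lemma exp_eq_Rm (h : (0 : Fin (n+1)) ≠ Fin.last n) (s : ℝ) :
    exp (s • K0n n) = Rm n s := by
  have key : ∀ t : ℝ, HasDerivAt (fun u : ℝ => exp (u • K0n n) * Rm n (-u)) 0 t := by
    intro t
    have h1 : HasDerivAt (fun u : ℝ => exp (u • K0n n)) (exp (t • K0n n) * K0n n) t :=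
      hasDerivAt_exp_smul_const (K0n n) t
    have heq : (fun u : ℝ => Rm n (-u)) =
        fun u => (1 - Pm n + Real.cos u • Pm n) + (-Real.sin u) • K0n n := by
      funext u
      simp [Rm, Real.cos_neg, Real.sin_neg, neg_smul]
    have h2 : HasDerivAt (fun u : ℝ => Rm n (-u))
        ((0 + (-Real.sin t) • Pm n) + (-Real.cos t) • K0n n) t := by
      rw [heq]
      exact (((hasDerivAt_const t (1 - Pm n)).add
        ((Real.hasDerivAt_cos t).smul_const (Pm n))).add
        ((Real.hasDerivAt_sin t).neg.smul_const (K0n n)))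
    have h3 := h1.mul h2
    refine h3.congr_deriv ?_
    have hKR : K0n n * Rm n (-t) = Real.cos t • K0n n + Real.sin t • Pm n := by
      rw [KR h, Real.cos_neg, Real.sin_neg, neg_smul, sub_neg_eq_add]
    rw [mul_assoc, hKR]
    rw [show (0 + (-Real.sin t) • Pm n) + (-Real.cos t) • K0n n
        = -(Real.cos t • K0n n + Real.sin t • Pm n) by module]
    rw [mul_neg, add_neg_cancel]
  have hconst : exp (s • K0n n) * Rm n (-s) = exp ((0:ℝ) • K0n n) * Rm n (-0) :=
    is_const_of_deriv_eq_zero (fun x => (key x).differentiableAt)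
      (fun x => (key x).deriv) s 0
  have h0 : exp ((0:ℝ) • K0n n) * Rm n (-0) = 1 := by
    simp [R_zero, exp_zero]
  have hinv : Rm n (-s) * Rm n s = 1 := by
    rw [Rm_mul h, neg_add_cancel, R_zero]
  calc exp (s • K0n n) = exp (s • K0n n) * (Rm n (-s) * Rm n s) := by rw [hinv, mul_one]
    _ = (exp (s • K0n n) * Rm n (-s)) * Rm n s := by rw [mul_assoc]
    _ = Rm n s := by rw [hconst.trans h0, one_mul]

lemma Rm_g (h : (0 : Fin (n+1)) ≠ Fin.last n) (s : ℝ) :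
    (Rm n s)ᵀ * gMat n * Rm n s = gMat n := by
  have hg : gMat n = -Rm n Real.pi := by
    rw [gMat_eq h]
    simp [Rm, Real.cos_pi, Real.sin_pi]
    module
  rw [Rm_transpose, hg, mul_neg, neg_mul, Rm_mul h, Rm_mul h]
  norm_num

section indices
variable (hn : 2 ≤ n)
include hn

lemma h0l' : (0 : Fin (n+1)) ≠ Fin.last n := by
  intro heq
  have := congrArg Fin.val heq
  rw [Fin.val_zero, Fin.val_last] at this
  omega

lemma val_one'' : (1 : Fin (n+1)).val = 1 := by
  rw [Fin.val_one']; exact Nat.mod_eq_of_lt (by omega)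

lemma h10' : (1 : Fin (n+1)) ≠ 0 := by
  simp [Fin.ext_iff, val_one'' hn]
  omega

lemma h1l' : (1 : Fin (n+1)) ≠ Fin.last n := by
  intro heq
  have := congrArg Fin.val heq
  rw [val_one'' hn, Fin.val_last] at this
  omega

lemma xPt_mem (a : ℝ) (ha : 0 < a) : xPt n a ∈ WR n := by
  have h10 := h10' hn
  have h1l := h1l' hn
  have h0l := h0l' hn
  refine ⟨?_, ?_, ?_⟩
  · show mdot n (xPt n a) (xPt n a) = 1
    rw [mdot, Fintype.sum_eq_add (1 : Fin (n+1)) (Fin.last n) h1l (fun i hi => by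
      simp [xPt, hi.1, hi.2])]
    simp [xPt, eta, h10, h1l, h1l.symm, h0l.symm]
    nlinarith [Real.cosh_sq a]
  · simp only [xPt, if_neg (h10.symm ∘ Eq.symm), if_neg h0l]
    simp [h10.symm, h0l, Real.sinh_pos_iff, ha]
  · simp [xPt, h1l.symm, Real.cosh_pos]

lemma mulVec_zero_one (s a : ℝ) :
    (Rm n s).mulVec (xPt n a) 0 = Real.sin s * Real.cosh a ∧
    (Rm n s).mulVec (xPt n a) 1 = Real.sinh a := by
  have h10 := h10' hn
  have h1l := h1l' hn
  have h0l := h0l' hn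
  have hx0 : xPt n a 0 = 0 := by simp [xPt, h10.symm, h0l]
  have hx1 : xPt n a 1 = Real.sinh a := by simp [xPt]
  have hxl : xPt n a (Fin.last n) = Real.cosh a := by simp [xPt, h1l.symm]
  constructor <;>
  · simp [Rm, Pm, K0n, E, Matrix.add_mulVec, Matrix.sub_mulVec, Matrix.smul_mulVec,
      Matrix.one_mulVec, Matrix.single_mulVec, Function.update_apply,
      h0l, h0l.symm, h10, h10.symm, h1l, h1l.symm, hx0, hx1, hxl]
end indices

lemma notin_WR (hn : 2 ≤ n) {s : ℝ} (hs : s ∈ Set.Ioo (0:ℝ) Real.pi) {a : ℝ} (ha : 0 < a)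
    (hta : Real.tanh a < Real.sin s) :
    (exp (s • K0n n)).mulVec (xPt n a) ∉ WR n := by
  rw [exp_eq_Rm (h0l' hn)]
  rintro ⟨-, habs, -⟩
  obtain ⟨hy0, hy1⟩ := mulVec_zero_one hn s a
  rw [hy0, hy1] at habs
  have hc := Real.cosh_pos a
  rw [Real.tanh_eq_sinh_div_cosh, div_lt_iff₀ hc] at hta
  have := le_abs_self (Real.sin s * Real.cosh a)
  linarith


/-- The wedge `W_R` is not properly contained in itself: for every `s ∈ (0, π)` one has
`exp(s·K₀ₙ)·W_R ⊄ W_R`; specifically, for any `a > 0` with `tanh a < sin s` the point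
`x_a = (0, sinh a, 0, …, 0, cosh a)` lies in `W_R` while `exp(s·K₀ₙ)·x_a ∉ W_R`.
Consequently there is no `ε > 0` such that all form-preserving matrices `λ` with
`‖λ − I‖ < ε` satisfy `λ·W_R ⊆ W_R`. -/
theorem WR_not_properly_contained_in_itself (n : ℕ) (hn : 2 ≤ n) :
    (∀ s ∈ Set.Ioo (0 : ℝ) Real.pi,
      ¬ ((fun x => (exp (s • K0n n)).mulVec x) '' WR n ⊆ WR n)) ∧
    (∀ s ∈ Set.Ioo (0 : ℝ) Real.pi, ∀ a > (0 : ℝ), Real.tanh a < Real.sin s →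
      xPt n a ∈ WR n ∧ (exp (s • K0n n)).mulVec (xPt n a) ∉ WR n) ∧
    ¬ (∃ ε > (0 : ℝ), ∀ lam : Matrix (Fin (n + 1)) (Fin (n + 1)) ℝ,
        lamᵀ * gMat n * lam = gMat n → ‖lam - 1‖ < ε →
          (fun x => lam.mulVec x) '' WR n ⊆ WR n) := by
  have part2 : ∀ s ∈ Set.Ioo (0 : ℝ) Real.pi, ∀ a > (0 : ℝ), Real.tanh a < Real.sin s →
      xPt n a ∈ WR n ∧ (exp (s • K0n n)).mulVec (xPt n a) ∉ WR n :=
    fun s hs a ha hta => ⟨xPt_mem hn a ha, notin_WR hn hs ha hta⟩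
  have part1 : ∀ s ∈ Set.Ioo (0 : ℝ) Real.pi,
      ¬ ((fun x => (exp (s • K0n n)).mulVec x) '' WR n ⊆ WR n) := by
    intro s hs hsub
    have hsin : 0 < Real.sin s := Real.sin_pos_of_pos_of_lt_pi hs.1 hs.2
    set a := Real.arsinh (Real.sin s / 2) with ha_def
    have ha : 0 < a := Real.arsinh_pos_iff.2 (by linarith)
    have hta : Real.tanh a < Real.sin s := by
      rw [Real.tanh_eq_sinh_div_cosh, ha_def, Real.sinh_arsinh,
        div_lt_iff₀ (Real.cosh_pos _)]
      nlinarith [Real.one_le_cosh (Real.arsinh (Real.sin s / 2))]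
    obtain ⟨hin, hout⟩ := part2 s hs a ha hta
    exact hout (hsub ⟨xPt n a, hin, rfl⟩)
  refine ⟨part1, part2, ?_⟩
  rintro ⟨ε, hε, H⟩
  have hcont : Continuous (fun u : ℝ => Rm n u) := by
    unfold Rm
    exact (continuous_const.add (Real.continuous_cos.smul continuous_const)).add
      (Real.continuous_sin.smul continuous_const)
  have htend : Filter.Tendsto (fun u : ℝ => ‖Rm n u - 1‖) (nhds 0) (nhds 0) := by
    have h1 : Filter.Tendsto (fun u : ℝ => Rm n u) (nhds 0) (nhds (1 : Matrix (Fin (n+1)) (Fin (n+1)) ℝ)) := by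
      have := hcont.tendsto 0
      rwa [R_zero] at this
    have := (h1.sub_const 1).norm
    simpa using this
  have hev : ∀ᶠ u in nhds (0:ℝ), ‖Rm n u - 1‖ < ε := htend.eventually_lt_const hε
  obtain ⟨δ, hδ, hball⟩ := Metric.eventually_nhds_iff.mp hev
  set s₀ := min (δ/2) (Real.pi/2) with hs₀def
  have hs₀pos : 0 < s₀ := lt_min (by linarith) (by positivity)
  have hs₀lt : s₀ < Real.pi := lt_of_le_of_lt (min_le_right _ _) (by linarith [Real.pi_pos])
  have hdist : dist s₀ (0:ℝ) < δ := by
    rw [Real.dist_eq, sub_zero, abs_of_pos hs₀pos]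
    calc s₀ ≤ δ/2 := min_le_left _ _
      _ < δ := by linarith
  have hnorm : ‖Rm n s₀ - 1‖ < ε := hball hdist
  have hsub := H (Rm n s₀) (Rm_g (h0l' hn) s₀) hnorm
  apply part1 s₀ ⟨hs₀pos, hs₀lt⟩
  rw [exp_eq_Rm (h0l' hn)]
  exact hsub
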